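/- Let γ ≥ 2 and define Θ(x,y) = V(x) - V(y) - V'(y)(x - y) where V(x) = x^γ/γ and V'(x) = x^{γ-1}. Then there exists a constant c > 0 (depending only on γ) such that for all x ≥ 0, y ≥ 0, Θ(x,y) ≥ c (x-y)^2 (x^{γ-2} + y^{γ-2}). -/

import Mathlib

open MeasureTheory intervalIntegral

-- beta-type integral: ∫_0^1 (1-s) s^p ds with p = γ-2
lemma aux_intA (γ : ℝ) (hγ : 2 ≤ γ) :
    ∫ s in (0:ℝ)..1, (1 - s) * s ^ (γ - 2) = 1 / (γ - 1) - 1 / γ := by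
  have h1 : (-1:ℝ) < γ - 2 := by linarith
  have h2 : (-1:ℝ) < γ - 1 := by linarith
  have hcong : Set.EqOn (fun s : ℝ => (1 - s) * s ^ (γ - 2))
      (fun s : ℝ => s ^ (γ - 2) - s ^ (γ - 1)) (Set.uIcc 0 1) := by
    intro s hs
    rw [Set.uIcc_of_le (by norm_num : (0:ℝ) ≤ 1)] at hs
    have hs0 : (0:ℝ) ≤ s := hs.1
    have : s ^ (γ - 1) = s * s ^ (γ - 2) := by
      rw [show γ - 1 = 1 + (γ - 2) by ring, Real.rpow_add' hs0 (by linarith), Real.rpow_one]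
    simp only [this]; ring
  rw [intervalIntegral.integral_congr hcong]
  rw [intervalIntegral.integral_sub (intervalIntegral.intervalIntegrable_rpow (Or.inl (by linarith)))
    (intervalIntegral.intervalIntegrable_rpow (Or.inl (by linarith)))]
  rw [integral_rpow (Or.inl h1), integral_rpow (Or.inl h2)]
  rw [show γ - 2 + 1 = γ - 1 by ring, show γ - 1 + 1 = γ by ring]
  rw [Real.one_rpow, Real.one_rpow, Real.zero_rpow (by linarith), Real.zero_rpow (by linarith)]
  ring

lemma aux_intB (γ : ℝ) (hγ : 2 ≤ γ) :
    ∫ s in (0:ℝ)..1, (1 - s) * (1 - s) ^ (γ - 2) = 1 / γ := by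
  have h2 : (-1:ℝ) < γ - 1 := by linarith
  have hcong : Set.EqOn (fun s : ℝ => (1 - s) * (1 - s) ^ (γ - 2))
      (fun s : ℝ => (1 - s) ^ (γ - 1)) (Set.uIcc 0 1) := by
    intro s hs
    rw [Set.uIcc_of_le (by norm_num : (0:ℝ) ≤ 1)] at hs
    have hs0 : (0:ℝ) ≤ 1 - s := by linarith [hs.2]
    simp only
    rw [show γ - 1 = 1 + (γ - 2) by ring, Real.rpow_add' hs0 (by linarith), Real.rpow_one]
  rw [intervalIntegral.integral_congr hcong]
  have := intervalIntegral.integral_comp_sub_left (a := (0:ℝ)) (b := 1)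
    (fun t : ℝ => t ^ (γ - 1)) 1
  simp only [sub_zero, sub_self] at this
  rw [this, integral_rpow (Or.inl h2), show γ - 1 + 1 = γ by ring, Real.one_rpow,
    Real.zero_rpow (by linarith)]
  ring

theorem stmt2 (γ : ℝ) (hγ : 2 ≤ γ) :
    ∃ c : ℝ, 0 < c ∧ ∀ x y : ℝ, 0 ≤ x → 0 ≤ y →
      x ^ γ / γ - y ^ γ / γ - y ^ (γ - 1) * (x - y) ≥
        c * (x - y) ^ 2 * (x ^ (γ - 2) + y ^ (γ - 2)) := by
  have hγ0 : (0:ℝ) < γ := by linarith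
  refine ⟨1 / (2 * γ), by positivity, fun x y hx hy => ?_⟩
  set u : ℝ → ℝ := fun s => y + s * (x - y) with hu_def
  -- Step A: the integral identity
  have hF : ∀ s : ℝ, HasDerivAt (fun s => (1 - s) * (x - y) * (u s) ^ (γ - 1) + (u s) ^ γ / γ)
      ((1 - s) * (γ - 1) * (x - y) ^ 2 * (u s) ^ (γ - 2)) s := by
    intro s
    have hu' : HasDerivAt u (x - y) s := by
      have : HasDerivAt (fun s : ℝ => y + s * (x - y)) (0 + 1 * (x - y)) s :=
        (hasDerivAt_const s y).add ((hasDerivAt_id s).mul_const (x - y))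
      rw [show (0:ℝ) + 1 * (x - y) = x - y by ring] at this
      exact this
    have h1 : HasDerivAt (fun s => (u s) ^ (γ - 1)) ((γ - 1) * (u s) ^ (γ - 2) * (x - y)) s := by
      have := (Real.hasDerivAt_rpow_const (x := u s) (p := γ - 1)
        (Or.inr (by linarith))).comp s hu'
      rw [show γ - 1 - 1 = γ - 2 by ring] at this
      exact this
    have h2 : HasDerivAt (fun s => (u s) ^ γ) (γ * (u s) ^ (γ - 1) * (x - y)) s := by
      have := (Real.hasDerivAt_rpow_const (x := u s) (p := γ)
        (Or.inr (by linarith))).comp s hu'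
      exact this
    have hlin : HasDerivAt (fun s : ℝ => (1 - s) * (x - y)) ((0 - 1) * (x - y)) s :=
      ((hasDerivAt_const s 1).sub (hasDerivAt_id s)).mul_const (x - y)
    have := (hlin.mul h1).add (h2.div_const γ)
    convert this using 1
    · rfl
    · rfl
    · rfl
    rw [show γ * u s ^ (γ - 1) * (x - y) / γ = u s ^ (γ - 1) * (x - y) by
      rw [mul_assoc, mul_div_cancel_left₀ _ hγ0.ne']]
    ring
  have hcont : Continuous fun s => (1 - s) * (γ - 1) * (x - y) ^ 2 * (u s) ^ (γ - 2) := by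
    have hcu : Continuous u := by fun_prop
    have : Continuous fun s => (u s) ^ (γ - 2) :=
      (Real.continuous_rpow_const (by linarith)).comp hcu
    fun_prop
  have key : x ^ γ / γ - y ^ γ / γ - y ^ (γ - 1) * (x - y)
      = ∫ s in (0:ℝ)..1, (1 - s) * (γ - 1) * (x - y) ^ 2 * (u s) ^ (γ - 2) := by
    rw [intervalIntegral.integral_eq_sub_of_hasDerivAt (fun s _ => hF s)
      (hcont.intervalIntegrable 0 1)]
    have hu1 : u 1 = x := by simp [hu_def]
    have hu0 : u 0 = y := by simp [hu_def]
    rw [hu1, hu0]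
    ring
  -- Step B: pointwise lower bound by the comparison integrand
  set g : ℝ → ℝ := fun s => (γ - 1) * (x - y) ^ 2 / 2 *
    ((1 - s) * s ^ (γ - 2) * x ^ (γ - 2) + (1 - s) * (1 - s) ^ (γ - 2) * y ^ (γ - 2)) with hg_def
  have hgcont : Continuous g := by
    have h1 : Continuous fun s : ℝ => s ^ (γ - 2) := Real.continuous_rpow_const (by linarith)
    have h2 : Continuous fun s : ℝ => (1 - s) ^ (γ - 2) :=
      (Real.continuous_rpow_const (by linarith)).comp (by fun_prop)
    fun_prop
  have hpt : ∀ s ∈ Set.Icc (0:ℝ) 1,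
      g s ≤ (1 - s) * (γ - 1) * (x - y) ^ 2 * (u s) ^ (γ - 2) := by
    intro s hs
    obtain ⟨hs0, hs1⟩ := hs
    have hb1 : (s * x) ^ (γ - 2) ≤ (u s) ^ (γ - 2) := by
      apply Real.rpow_le_rpow (mul_nonneg hs0 hx) _ (by linarith)
      simp only [hu_def]; nlinarith
    have hb2 : ((1 - s) * y) ^ (γ - 2) ≤ (u s) ^ (γ - 2) := by
      apply Real.rpow_le_rpow (mul_nonneg (by linarith) hy) _ (by linarith)
      simp only [hu_def]; nlinarith
    rw [Real.mul_rpow hs0 hx] at hb1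
    rw [Real.mul_rpow (by linarith) hy] at hb2
    have hnn : (0:ℝ) ≤ (1 - s) * (γ - 1) * (x - y) ^ 2 / 2 :=
      div_nonneg (mul_nonneg (mul_nonneg (by linarith) (by linarith)) (sq_nonneg _)) (by norm_num)
    simp only [hg_def]
    nlinarith [mul_le_mul_of_nonneg_left hb1 hnn, mul_le_mul_of_nonneg_left hb2 hnn]
  have hmono : (∫ s in (0:ℝ)..1, g s) ≤
      ∫ s in (0:ℝ)..1, (1 - s) * (γ - 1) * (x - y) ^ 2 * (u s) ^ (γ - 2) :=
    intervalIntegral.integral_mono_on (by norm_num) (hgcont.intervalIntegrable 0 1)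
      (hcont.intervalIntegrable 0 1) hpt
  -- Step C: compute ∫ g
  have hgval : (∫ s in (0:ℝ)..1, g s) = (γ - 1) * (x - y) ^ 2 / 2 *
      ((1 / (γ - 1) - 1 / γ) * x ^ (γ - 2) + (1 / γ) * y ^ (γ - 2)) := by
    have hIA : IntervalIntegrable (fun s : ℝ => (1 - s) * s ^ (γ - 2)) volume 0 1 := by
      have h1 : Continuous fun s : ℝ => s ^ (γ - 2) := Real.continuous_rpow_const (by linarith)
      exact (by fun_prop : Continuous fun s : ℝ => (1 - s) * s ^ (γ - 2)).intervalIntegrable 0 1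
    have hIB : IntervalIntegrable (fun s : ℝ => (1 - s) * (1 - s) ^ (γ - 2)) volume 0 1 := by
      have h2 : Continuous fun s : ℝ => (1 - s) ^ (γ - 2) :=
        (Real.continuous_rpow_const (by linarith)).comp (by fun_prop)
      exact (by fun_prop : Continuous fun s : ℝ => (1 - s) * (1 - s) ^ (γ - 2)).intervalIntegrable 0 1
    simp only [hg_def]
    rw [show (fun s : ℝ => (γ - 1) * (x - y) ^ 2 / 2 *
        ((1 - s) * s ^ (γ - 2) * x ^ (γ - 2) + (1 - s) * (1 - s) ^ (γ - 2) * y ^ (γ - 2)))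
      = fun s : ℝ => (γ - 1) * (x - y) ^ 2 / 2 * x ^ (γ - 2) * ((1 - s) * s ^ (γ - 2))
        + (γ - 1) * (x - y) ^ 2 / 2 * y ^ (γ - 2) * ((1 - s) * (1 - s) ^ (γ - 2))
      from funext fun s => by ring]
    rw [intervalIntegral.integral_add (hIA.const_mul _) (hIB.const_mul _),
      intervalIntegral.integral_const_mul, intervalIntegral.integral_const_mul,
      aux_intA γ hγ, aux_intB γ hγ]
    ring
  rw [ge_iff_le, key]
  refine le_trans ?_ hmono
  rw [hgval]
  have hP : (0:ℝ) ≤ x ^ (γ - 2) := Real.rpow_nonneg hx _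
  have hQ : (0:ℝ) ≤ y ^ (γ - 2) := Real.rpow_nonneg hy _
  have e1 : (γ - 1) * (x - y) ^ 2 / 2 * ((1 / (γ - 1) - 1 / γ) * x ^ (γ - 2) + 1 / γ * y ^ (γ - 2))
      = 1 / (2 * γ) * (x - y) ^ 2 * x ^ (γ - 2) + (γ - 1) / (2 * γ) * (x - y) ^ 2 * y ^ (γ - 2) := by
    have h1 : γ - 1 ≠ 0 := by linarith
    have h2 : γ ≠ 0 := by linarith
    field_simp
    ring
  rw [e1]
  have h3 : 1 / (2 * γ) ≤ (γ - 1) / (2 * γ) := by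
    rw [div_le_div_iff₀ (by positivity) (by positivity)]
    nlinarith
  calc 1 / (2 * γ) * (x - y) ^ 2 * (x ^ (γ - 2) + y ^ (γ - 2))
      = 1 / (2 * γ) * (x - y) ^ 2 * x ^ (γ - 2) + 1 / (2 * γ) * (x - y) ^ 2 * y ^ (γ - 2) := by
        ring
    _ ≤ 1 / (2 * γ) * (x - y) ^ 2 * x ^ (γ - 2)
        + (γ - 1) / (2 * γ) * (x - y) ^ 2 * y ^ (γ - 2) := by
        have := mul_le_mul_of_nonneg_right
          (mul_le_mul_of_nonneg_right h3 (sq_nonneg (x - y))) hQ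
        linarith
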